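/- With the notation of the γ_k construction: if π_k → 0 as k → ∞ and for each k, γ_k denotes the least l ∈ {0,…,k−1} with δ(l+1,k) > 1/(l+1) when such l exists and ⌊k/2⌋ otherwise, then γ_k → ∞ as k → ∞. -/

import Mathlib

open Filter

/-- δ(l,k) = max of π over s ∈ [k−l, k]. -/
noncomputable def paperDelta (π : ℕ → ℝ) (l k : ℕ) : ℝ :=
  Finset.sup' (Finset.Icc (k - l) k)
    ⟨k, Finset.mem_Icc.mpr ⟨Nat.sub_le _ _, le_refl k⟩⟩ π

-- γ_k: the least l < k with δ(l+1,k) > 1/(l+1), if one exists; otherwise ⌊k/2⌋.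
open Classical in
noncomputable def paperGamma (π : ℕ → ℝ) (k : ℕ) : ℕ :=
  if h : ∃ l, l < k ∧ 1 / ((l : ℝ) + 1) < paperDelta π (l + 1) k then Nat.find h
  else k / 2

theorem stmt_7 (q : ℕ → ℝ) (hq : Antitone q) (hq0 : ∀ k, 0 ≤ q k) (hq0' : 0 < q 0)
    (Q : ℕ → ℝ) (hQ : ∀ n, Q n = ∑ k ∈ Finset.range n, q k)
    (π : ℕ → ℝ) (hπ : ∀ k, π k = (Q (2 ^ k) - Q (2 ^ (k - 1))) / Q (2 ^ (k - 1)))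
    (hπ0 : Tendsto π atTop (nhds 0)) :
    Tendsto (fun k => paperGamma π k) atTop atTop := by
  rw [tendsto_atTop]
  intro N
  have hε : (0:ℝ) < 1 / (N + 1) := by positivity
  have h1 : ∀ᶠ s in atTop, π s < 1 / (N + 1) := hπ0.eventually (gt_mem_nhds hε)
  obtain ⟨M, hM⟩ := eventually_atTop.mp h1
  rw [eventually_atTop]
  refine ⟨max (M + N) (2 * N), fun k hk => ?_⟩
  have hk1 : M + N ≤ k := le_trans (le_max_left _ _) hk
  have hk2 : 2 * N ≤ k := le_trans (le_max_right _ _) hk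
  unfold paperGamma
  split
  · rename_i h
    rw [Nat.le_find_iff]
    intro m hm hcon
    obtain ⟨hmk, hlt⟩ := hcon
    have : paperDelta π (m + 1) k < 1 / ((m : ℝ) + 1) := by
      unfold paperDelta
      refine (Finset.sup'_lt_iff _).2 ?_
      intro s hs
      rw [Finset.mem_Icc] at hs
      have hsM : M ≤ s := by
        refine le_trans (le_trans (Nat.le_sub_of_add_le hk1) ?_) hs.1
        exact Nat.sub_le_sub_left (Nat.succ_le_of_lt hm) k
      have : π s < 1 / (N + 1) := hM s hsM
      refine lt_of_lt_of_le this ?_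
      apply one_div_le_one_div_of_le
      · positivity
      · have : m + 1 ≤ N + 1 := Nat.succ_le_succ hm.le
        exact_mod_cast this
    linarith
  · omega
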